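/- Let Φ be a semi-coherent structure function on n ≥ 1 components with structural signature s, let T_1,…,T_n be i.i.d. exponential random variables with rate μ > 0, let T_fail := inf{ t ≥ 0 : Φ(1{T_1 > t},…,1{T_n > t}) = 0 }, fix r ∈ {1,…,n}, and set T_rep := min{T_fail, T_{r:n}}. Then the number N(T_rep) := #{ i : T_i ≤ T_rep } of failed components at the first repair satisfies: P( N(T_rep) = j ) = s_j for 1 ≤ j < r, P( N(T_rep) = r ) = Σ_{k=r}^{n} s_k, and P( N(T_rep) = j ) = 0 for j > r. -/

import Mathlib

open MeasureTheory ProbabilityTheory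

/-- `S̄ k`: the proportion of states with exactly `k` failed components in which
the system works. -/
noncomputable def Sbar (n : ℕ) (Φ : (Fin n → Bool) → Bool) (k : ℕ) : ℝ :=
  ((Finset.univ.filter (fun x : Fin n → Bool =>
      (Finset.univ.filter (fun i => x i = false)).card = k ∧ Φ x = true)).card : ℝ) /
    (n.choose k : ℝ)

/-- The structural signature `s k = S̄_{k-1} - S̄_k`. -/
noncomputable def structSig (n : ℕ) (Φ : (Fin n → Bool) → Bool) (k : ℕ) : ℝ :=
  Sbar n Φ (k - 1) - Sbar n Φ k

/-- The `k`-th order statistic (`k : Fin n`, 0-based) of a tuple `x : Fin n → ℝ`. -/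
noncomputable def orderStat (n : ℕ) (x : Fin n → ℝ) (k : Fin n) : ℝ :=
  x (Tuple.sort x k)

/-- The system failure time: the first nonnegative time at which the structure
function evaluated at the vector of component states (component `i` works at time `t`
iff `t < x i`) is `0`. -/
noncomputable def failTime (n : ℕ) (Φ : (Fin n → Bool) → Bool) (x : Fin n → ℝ) : ℝ :=
  sInf {t : ℝ | 0 ≤ t ∧ Φ (fun i => decide (t < x i)) = false}

set_option linter.unusedVariables false
set_option linter.unusedSectionVars false
set_option maxHeartbeats 1000000

namespace Stmt17

variable {n : ℕ}

/-- The state vector whose failed set is `A`. -/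
def stateOf (A : Finset (Fin n)) : Fin n → Bool := fun i => decide (i ∉ A)

/-- The working-state vector after `k` failures (component works iff its rank is `≥ k`). -/
noncomputable def wvec (x : Fin n → ℝ) (k : ℕ) : Fin n → Bool :=
  fun i => decide (k ≤ (((Tuple.sort x).symm i : Fin n) : ℕ))

lemma sort_strictMono {x : Fin n → ℝ} (hx : Function.Injective x) :
    StrictMono (x ∘ Tuple.sort x) :=
  (Tuple.monotone_sort x).strictMono_of_injective (hx.comp (Tuple.sort x).injective)

lemma lt_iff_rank_lt {x : Fin n → ℝ} (hx : Function.Injective x) (i : Fin n) (m : Fin n) :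
    x i < x (Tuple.sort x m) ↔ (Tuple.sort x).symm i < m := by
  have h := (sort_strictMono hx).lt_iff_lt (a := (Tuple.sort x).symm i) (b := m)
  simpa [Function.comp] using h

lemma le_iff_rank_le {x : Fin n → ℝ} (hx : Function.Injective x) (i : Fin n) (m : Fin n) :
    x i ≤ x (Tuple.sort x m) ↔ (Tuple.sort x).symm i ≤ m := by
  have h := (sort_strictMono hx).le_iff_le (a := (Tuple.sort x).symm i) (b := m)
  simpa [Function.comp] using h

lemma lt_iff_rank_lt' {x : Fin n → ℝ} (hx : Function.Injective x) (m : Fin n) (i : Fin n) :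
    x (Tuple.sort x m) < x i ↔ m < (Tuple.sort x).symm i := by
  have h := (sort_strictMono hx).lt_iff_lt (a := m) (b := (Tuple.sort x).symm i)
  simpa [Function.comp] using h

/-- number of indices of rank `≤ m` is `m+1`. -/
lemma card_le_orderStat {x : Fin n → ℝ} (hx : Function.Injective x) (m : Fin n) :
    (Finset.univ.filter (fun i => x i ≤ x (Tuple.sort x m))).card = (m : ℕ) + 1 := by
  classical
  have h1 : (Finset.univ.filter (fun i => x i ≤ x (Tuple.sort x m)))
      = Finset.image (Tuple.sort x) (Finset.univ.filter (fun j => j ≤ m)) := by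
    ext i
    simp only [Finset.mem_filter, Finset.mem_univ, true_and, Finset.mem_image]
    constructor
    · intro h
      exact ⟨(Tuple.sort x).symm i, by simpa using (le_iff_rank_le hx i m).1 h,
        by simp⟩
    · rintro ⟨j, hj, rfl⟩
      exact (le_iff_rank_le hx _ m).2 (by simpa using hj)
  rw [h1, Finset.card_image_of_injective _ (Tuple.sort x).injective]
  have : (Finset.univ.filter (fun j : Fin n => j ≤ m)) = Finset.Iic m := by
    ext j; simp
  rw [this, Fin.card_Iic]

lemma rank_eq_card {x : Fin n → ℝ} (hx : Function.Injective x) (i : Fin n) :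
    (((Tuple.sort x).symm i : Fin n) : ℕ)
      = (Finset.univ.filter (fun j => x j < x i)).card := by
  classical
  have h1 : (Finset.univ.filter (fun j => x j < x i))
      = Finset.image (Tuple.sort x)
          (Finset.univ.filter (fun m : Fin n => m < (Tuple.sort x).symm i)) := by
    ext j
    simp only [Finset.mem_filter, Finset.mem_univ, true_and, Finset.mem_image]
    constructor
    · intro h
      refine ⟨(Tuple.sort x).symm j, ?_, by simp⟩
      have := (lt_iff_rank_lt hx j ((Tuple.sort x).symm i)).1 (by simpa using h)
      simpa using this
    · rintro ⟨m, hm, rfl⟩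
      have := (lt_iff_rank_lt' hx m i).2 hm
      simpa using this
  rw [h1, Finset.card_image_of_injective _ (Tuple.sort x).injective]
  have : (Finset.univ.filter (fun m : Fin n => m < (Tuple.sort x).symm i))
      = Finset.Iio ((Tuple.sort x).symm i) := by
    ext j; simp
  rw [this, Fin.card_Iio]


/-- the set of tuples where the coordinates in `A` are strictly below those outside. -/
def Gset (A : Finset (Fin n)) : Set (Fin n → ℝ) :=
  {x | ∀ i ∈ A, ∀ j, j ∉ A → x i < x j}

lemma mem_Gset_iff_rank {x : Fin n → ℝ} (hx : Function.Injective x) {A : Finset (Fin n)}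
    {k : ℕ} (hA : A.card = k) (hG : x ∈ Gset A) (i : Fin n) :
    i ∈ A ↔ (((Tuple.sort x).symm i : Fin n) : ℕ) < k := by
  classical
  constructor
  · intro hi
    rw [rank_eq_card hx]
    have hsub : (Finset.univ.filter (fun j => x j < x i)) ⊆ A.erase i := by
      intro j hj
      simp only [Finset.mem_filter, Finset.mem_univ, true_and] at hj
      by_cases hjA : j ∈ A
      · refine Finset.mem_erase.2 ⟨?_, hjA⟩
        rintro rfl; exact lt_irrefl _ hj
      · exact absurd (hG i hi j hjA) (not_lt.2 hj.le)
    calc (Finset.univ.filter (fun j => x j < x i)).card ≤ (A.erase i).card :=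
          Finset.card_le_card hsub
      _ < A.card := Finset.card_erase_lt_of_mem hi
      _ = k := hA
  · intro hr
    by_contra hi
    have hsub : A ⊆ Finset.univ.filter (fun j => x j < x i) := by
      intro j hj
      simp only [Finset.mem_filter, Finset.mem_univ, true_and]
      exact hG j hj i hi
    have := Finset.card_le_card hsub
    rw [hA, ← rank_eq_card hx] at this
    omega

lemma wvec_eq_stateOf {x : Fin n → ℝ} (hx : Function.Injective x) {A : Finset (Fin n)}
    {k : ℕ} (hA : A.card = k) (hG : x ∈ Gset A) :
    wvec x k = stateOf A := by
  funext i
  have h := mem_Gset_iff_rank hx hA hG i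
  simp only [wvec, stateOf]
  by_cases hi : i ∈ A
  · simp [hi, not_le.2 (h.1 hi)]
  · have : k ≤ (((Tuple.sort x).symm i : Fin n) : ℕ) := not_lt.1 (fun hc => hi (h.2 hc))
    simp [hi, this]

/-- the canonical set of the `k` lowest-rank indices. -/
noncomputable def Aset (x : Fin n → ℝ) (k : ℕ) : Finset (Fin n) :=
  Finset.univ.filter (fun i => (((Tuple.sort x).symm i : Fin n) : ℕ) < k)

lemma card_Aset (x : Fin n → ℝ) {k : ℕ} (hk : k ≤ n) : (Aset x k).card = k := by
  classical
  have h1 : Aset x k = Finset.image (Tuple.sort x)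
      (Finset.univ.filter (fun m : Fin n => (m : ℕ) < k)) := by
    ext i
    simp only [Aset, Finset.mem_filter, Finset.mem_univ, true_and, Finset.mem_image]
    constructor
    · intro h; exact ⟨(Tuple.sort x).symm i, by simpa using h, by simp⟩
    · rintro ⟨m, hm, rfl⟩; simpa using hm
  rw [h1, Finset.card_image_of_injective _ (Tuple.sort x).injective]
  have : (Finset.univ.filter (fun m : Fin n => (m : ℕ) < k)).card = (Finset.range k).card := by
    refine Finset.card_bij' (fun m _ => (m : ℕ)) (fun m hm => ⟨m, lt_of_lt_of_le (Finset.mem_range.1 hm) hk⟩) ?_ ?_ ?_ ?_ <;> simp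
  rw [this, Finset.card_range]

lemma mem_Gset_Aset {x : Fin n → ℝ} (hx : Function.Injective x) (k : ℕ) :
    x ∈ Gset (Aset x k) := by
  intro i hi j hj
  simp only [Aset, Finset.mem_filter, Finset.mem_univ, true_and] at hi hj
  have hj' : k ≤ (((Tuple.sort x).symm j : Fin n) : ℕ) := not_lt.1 hj
  have : ((Tuple.sort x).symm i : Fin n) < (Tuple.sort x).symm j := by
    have : (((Tuple.sort x).symm i : Fin n) : ℕ) < (((Tuple.sort x).symm j : Fin n) : ℕ) := by omega
    exact this
  have h := (sort_strictMono hx) this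
  simpa [Function.comp] using h

lemma stateOf_Aset (x : Fin n → ℝ) (k : ℕ) : stateOf (Aset x k) = wvec x k := by
  funext i
  simp only [stateOf, wvec, Aset, Finset.mem_filter, Finset.mem_univ, true_and]
  by_cases h : k ≤ (((Tuple.sort x).symm i : Fin n) : ℕ)
  · simp [h, not_lt.2 h]
  · simp [h, lt_of_not_ge h]



noncomputable def kfail (Φ : (Fin n → Bool) → Bool) (x : Fin n → ℝ) : ℕ :=
  sInf {k : ℕ | Φ (wvec x k) = false}

lemma wvec_anti (x : Fin n → ℝ) {k l : ℕ} (hkl : k ≤ l) (i : Fin n) :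
    wvec x l i ≤ wvec x k i := by
  simp only [wvec]
  by_cases h : l ≤ (((Tuple.sort x).symm i : Fin n) : ℕ)
  · simp [h, le_trans hkl h]
  · simp [h]

lemma kfail_mem_n {Φ : (Fin n → Bool) → Bool} (hΦ0 : Φ (fun _ => false) = false)
    (x : Fin n → ℝ) : Φ (wvec x n) = false := by
  have : wvec x n = fun _ => false := by
    funext i
    simp [wvec, not_le.2 ((Tuple.sort x).symm i).isLt]
  rw [this, hΦ0]

lemma kfail_le {Φ : (Fin n → Bool) → Bool} (hΦ0 : Φ (fun _ => false) = false)
    (x : Fin n → ℝ) : kfail Φ x ≤ n :=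
  Nat.sInf_le (kfail_mem_n hΦ0 x)

lemma kfail_spec {Φ : (Fin n → Bool) → Bool} (hΦ0 : Φ (fun _ => false) = false)
    (x : Fin n → ℝ) : Φ (wvec x (kfail Φ x)) = false :=
  Nat.sInf_mem (⟨n, kfail_mem_n hΦ0 x⟩ : {k : ℕ | Φ (wvec x k) = false}.Nonempty)

lemma kfail_min {Φ : (Fin n → Bool) → Bool} {x : Fin n → ℝ} {k : ℕ}
    (hk : k < kfail Φ x) : Φ (wvec x k) = true := by
  have := Nat.notMem_of_lt_sInf hk
  simpa [Bool.not_eq_false] using this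

lemma lt_kfail_iff {Φ : (Fin n → Bool) → Bool}
    (hmono : ∀ x y : Fin n → Bool, (∀ i, x i ≤ y i) → Φ x ≤ Φ y)
    {x : Fin n → ℝ} {k : ℕ} (hΦ0 : Φ (fun _ => false) = false) :
    k < kfail Φ x ↔ Φ (wvec x k) = true := by
  constructor
  · exact kfail_min
  · intro h
    by_contra hc
    have hle : kfail Φ x ≤ k := not_lt.1 hc
    have hmle : Φ (wvec x k) ≤ Φ (wvec x (kfail Φ x)) :=
      hmono _ _ (fun i => wvec_anti x hle i)
    rw [h, kfail_spec hΦ0 x] at hmle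
    exact absurd hmle (by simp)

lemma kfail_pos {Φ : (Fin n → Bool) → Bool}
    (hmono : ∀ x y : Fin n → Bool, (∀ i, x i ≤ y i) → Φ x ≤ Φ y)
    (hΦ0 : Φ (fun _ => false) = false) (hΦ1 : Φ (fun _ => true) = true)
    (x : Fin n → ℝ) : 1 ≤ kfail Φ x := by
  have h1 : wvec x 0 = fun _ => true := by funext i; simp [wvec]
  have := (lt_kfail_iff hmono (x := x) (k := 0) hΦ0).2 (by rw [h1, hΦ1])
  omega

lemma failTime_eq {Φ : (Fin n → Bool) → Bool}
    (hmono : ∀ x y : Fin n → Bool, (∀ i, x i ≤ y i) → Φ x ≤ Φ y)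
    (hΦ0 : Φ (fun _ => false) = false) (hΦ1 : Φ (fun _ => true) = true)
    {x : Fin n → ℝ} (hx : Function.Injective x) (hpos : ∀ i, 0 < x i)
    (h : kfail Φ x - 1 < n) :
    failTime n Φ x = x (Tuple.sort x ⟨kfail Φ x - 1, h⟩) := by
  set K := kfail Φ x with hK
  have hK1 : 1 ≤ K := kfail_pos hmono hΦ0 hΦ1 x
  set σ := Tuple.sort x with hσ
  set a := x (σ ⟨K - 1, h⟩) with ha
  have hset : {t : ℝ | 0 ≤ t ∧ Φ (fun i => decide (t < x i)) = false} = Set.Ici a := by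
    ext t
    simp only [Set.mem_setOf_eq, Set.mem_Ici]
    constructor
    · rintro ⟨ht0, htΦ⟩
      by_contra hlt
      push_neg at hlt
      have hle : ∀ i, wvec x (K - 1) i ≤ decide (t < x i) := by
        intro i
        simp only [wvec]
        by_cases hr : K - 1 ≤ (((σ.symm i : Fin n)) : ℕ)
        · have hmle : a ≤ x i := by
            have : (⟨K - 1, h⟩ : Fin n) ≤ σ.symm i := hr
            have := (sort_strictMono hx).monotone this
            simpa [Function.comp, ← hσ] using this
          have : t < x i := lt_of_lt_of_le hlt hmle
          simp [hr, this]
        · have hr' : ¬ K - 1 ≤ (((Tuple.sort x).symm i : Fin n) : ℕ) := hr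
          have hr2 : ¬ K ≤ (((Tuple.sort x).symm i : Fin n) : ℕ) + 1 := by omega
          simp [hr, hr2]
      have hΦle : Φ (wvec x (K - 1)) ≤ Φ (fun i => decide (t < x i)) := hmono _ _ hle
      have hKm1 : Φ (wvec x (K - 1)) = true := kfail_min (show K - 1 < kfail Φ x by omega)
      rw [hKm1, htΦ] at hΦle
      exact absurd hΦle (by simp)
    · intro hat
      refine ⟨le_trans (hpos _).le hat, ?_⟩
      have hle : ∀ i, decide (t < x i) ≤ wvec x K i := by
        intro i
        by_cases hti : t < x i
        · have hai : a < x i := lt_of_le_of_lt hat hti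
          have := (lt_iff_rank_lt' hx ⟨K - 1, h⟩ i).1 hai
          have hr : K ≤ (((σ.symm i : Fin n)) : ℕ) := by
            have := Fin.lt_iff_val_lt_val.1 this
            simp only [← hσ] at this ⊢
            omega
          have hr' : K ≤ (((Tuple.sort x).symm i : Fin n) : ℕ) := hr
          simp [wvec, hti, hr']
        · simp [hti]
      have hΦle : Φ (fun i => decide (t < x i)) ≤ Φ (wvec x K) := hmono _ _ hle
      have hKs : Φ (wvec x K) = false := kfail_spec hΦ0 x
      rw [hKs] at hΦle
      rcases hb : Φ (fun i => decide (t < x i)) with _ | _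
      · rfl
      · rw [hb] at hΦle; exact absurd hΦle (by simp)
  rw [failTime, hset, csInf_Ici]

lemma card_filter_eq_min {Φ : (Fin n → Bool) → Bool}
    (hmono : ∀ x y : Fin n → Bool, (∀ i, x i ≤ y i) → Φ x ≤ Φ y)
    (hΦ0 : Φ (fun _ => false) = false) (hΦ1 : Φ (fun _ => true) = true)
    {x : Fin n → ℝ} (hx : Function.Injective x) (hpos : ∀ i, 0 < x i)
    {r : ℕ} (hr1 : 1 ≤ r) (hrn : r ≤ n) (hfin : r - 1 < n) :
    (Finset.univ.filter (fun i => x i ≤ min (failTime n Φ x) (orderStat n x ⟨r - 1, hfin⟩))).card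
      = min (kfail Φ x) r := by
  set K := kfail Φ x with hK
  have hK1 : 1 ≤ K := kfail_pos hmono hΦ0 hΦ1 x
  have hKn : K ≤ n := kfail_le hΦ0 x
  have hKm : K - 1 < n := by omega
  have hmn : min (K - 1) (r - 1) < n := by omega
  have hmin : min (failTime n Φ x) (orderStat n x ⟨r - 1, hfin⟩)
      = x (Tuple.sort x ⟨min (K - 1) (r - 1), hmn⟩) := by
    rw [failTime_eq hmono hΦ0 hΦ1 hx hpos hKm, orderStat]
    rcases le_total (K - 1) (r - 1) with hle | hle
    · have h1 : x (Tuple.sort x ⟨K-1,hKm⟩) ≤ x (Tuple.sort x ⟨r-1,hfin⟩) :=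
        (sort_strictMono hx).monotone (show (⟨K-1,hKm⟩ : Fin n) ≤ ⟨r-1,hfin⟩ from hle)
      rw [min_eq_left h1]
      exact congrArg x (congrArg _ (Fin.ext (min_eq_left hle).symm))
    · have h1 : x (Tuple.sort x ⟨r-1,hfin⟩) ≤ x (Tuple.sort x ⟨K-1,hKm⟩) :=
        (sort_strictMono hx).monotone (show (⟨r-1,hfin⟩ : Fin n) ≤ ⟨K-1,hKm⟩ from hle)
      rw [min_eq_right h1]
      exact congrArg x (congrArg _ (Fin.ext (min_eq_right hle).symm))
  rw [hmin, card_le_orderStat hx]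
  show min (K - 1) (r - 1) + 1 = min K r
  omega

def Wk (Φ : (Fin n → Bool) → Bool) (k : ℕ) : Finset (Finset (Fin n)) :=
  (Finset.powersetCard k (Finset.univ : Finset (Fin n))).filter
    (fun A => Φ (stateOf A) = true)

def Uset (Φ : (Fin n → Bool) → Bool) (k : ℕ) : Set (Fin n → ℝ) :=
  ⋃ A ∈ Wk Φ k, Gset A

lemma mem_Uset_iff {Φ : (Fin n → Bool) → Bool} {x : Fin n → ℝ} (hx : Function.Injective x) {k : ℕ} (hk : k ≤ n) :
    x ∈ Uset Φ k ↔ Φ (wvec x k) = true := by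
  constructor
  · rintro hU
    simp only [Uset, Set.mem_iUnion] at hU
    obtain ⟨A, hA, hGA⟩ := hU
    simp only [Wk, Finset.mem_filter, Finset.mem_powersetCard] at hA
    rw [wvec_eq_stateOf hx hA.1.2 hGA]
    exact hA.2
  · intro hw
    simp only [Uset, Set.mem_iUnion]
    refine ⟨Aset x k, ?_, mem_Gset_Aset hx k⟩
    simp only [Wk, Finset.mem_filter, Finset.mem_powersetCard]
    exact ⟨⟨Finset.subset_univ _, card_Aset x hk⟩, by rw [stateOf_Aset x k]; exact hw⟩

lemma Gset_disjoint {A B : Finset (Fin n)} (hcard : A.card = B.card) (hne : A ≠ B) :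
    Disjoint (Gset A) (Gset B) := by
  rw [Set.disjoint_left]
  rintro x hxA hxB
  have h1 : ∃ i, i ∈ A ∧ i ∉ B := by
    by_contra hc
    push_neg at hc
    exact hne (Finset.eq_of_subset_of_card_le (fun i hi => hc i hi) (le_of_eq hcard.symm))
  have h2 : ∃ j, j ∈ B ∧ j ∉ A := by
    by_contra hc
    push_neg at hc
    exact hne (Finset.eq_of_subset_of_card_le (fun i hi => hc i hi) (le_of_eq hcard)).symm
  obtain ⟨i, hiA, hiB⟩ := h1
  obtain ⟨j, hjB, hjA⟩ := h2
  exact absurd (hxB j hjB i hiB) (not_lt.2 (hxA i hiA j hjA).le)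


lemma card_Wk (Φ : (Fin n → Bool) → Bool) (k : ℕ) :
    (Wk Φ k).card = (Finset.univ.filter (fun x : Fin n → Bool =>
      (Finset.univ.filter (fun i => x i = false)).card = k ∧ Φ x = true)).card := by
  classical
  refine Finset.card_bij (fun A _ => stateOf A) ?_ ?_ ?_
  · intro A hA
    simp only [Wk, Finset.mem_filter, Finset.mem_powersetCard] at hA
    simp only [Finset.mem_filter, Finset.mem_univ, true_and]
    constructor
    · have : Finset.univ.filter (fun i => stateOf A i = false) = A := by
        ext i; simp [stateOf]
      rw [this]; exact hA.1.2
    · exact hA.2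
  · intro A hA B hB hAB
    ext i
    have h1 := congrFun hAB i
    simp only [stateOf] at h1
    by_cases hiA : i ∈ A <;> by_cases hiB : i ∈ B <;> simp [hiA, hiB] at h1 ⊢
  · intro y hy
    simp only [Finset.mem_filter, Finset.mem_univ, true_and] at hy
    refine ⟨Finset.univ.filter (fun i => y i = false), ?_, ?_⟩
    · simp only [Wk, Finset.mem_filter, Finset.mem_powersetCard]
      have hst : stateOf (Finset.univ.filter (fun i => y i = false)) = y := by
        funext i
        simp only [stateOf, Finset.mem_filter, Finset.mem_univ, true_and]
        cases h : y i <;> simp [h]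
      exact ⟨⟨Finset.subset_univ _, hy.1⟩, by rw [hst]; exact hy.2⟩
    · funext i
      simp only [stateOf, Finset.mem_filter, Finset.mem_univ, true_and]
      cases h : y i <;> simp [h]

lemma Sbar_eq_Wk (Φ : (Fin n → Bool) → Bool) (k : ℕ) :
    Sbar n Φ k = ((Wk Φ k).card : ℝ) / (n.choose k : ℝ) := by
  rw [Sbar, card_Wk]

lemma Sbar_n_eq_zero {Φ : (Fin n → Bool) → Bool} (hn : 1 ≤ n)
    (hΦ0 : Φ (fun _ => false) = false) : Sbar n Φ n = 0 := by
  classical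
  rw [Sbar]
  convert zero_div _
  norm_cast
  rw [Finset.card_eq_zero, Finset.filter_eq_empty_iff]
  rintro x -
  rintro ⟨hcard, hΦ⟩
  have hall : ∀ i, x i = false := by
    have huniv : Finset.univ.filter (fun i => x i = false) = Finset.univ :=
      Finset.eq_univ_of_card _ (by rw [hcard, Fintype.card_fin])
    intro i
    have := Finset.mem_univ i
    rw [← huniv, Finset.mem_filter] at this
    exact this.2
  have : x = fun _ => false := funext hall
  rw [this, hΦ0] at hΦ
  exact Bool.false_ne_true hΦ

lemma telescope (f : ℕ → ℝ) {r : ℕ} (hr1 : 1 ≤ r) :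
    ∀ m, r ≤ m → ∑ k ∈ Finset.Icc r m, (f (k - 1) - f k) = f (r - 1) - f m := by
  intro m
  induction m with
  | zero => omega
  | succ m ih =>
    intro hm
    rcases Nat.lt_or_ge m r with h | h
    · have : r = m + 1 := by omega
      subst this
      rw [Finset.Icc_self, Finset.sum_singleton]
    · rw [Finset.sum_Icc_succ_top (by omega : r ≤ m + 1), ih h]
      have : m + 1 - 1 = m := by omega
      rw [this]
      ring

lemma sum_structSig {Φ : (Fin n → Bool) → Bool} {r : ℕ} (hr1 : 1 ≤ r) (hrn : r ≤ n) :
    ∑ k ∈ Finset.Icc r n, structSig n Φ k = Sbar n Φ (r - 1) - Sbar n Φ n := by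
  simp only [structSig]
  exact telescope (Sbar n Φ) hr1 n hrn

lemma expMeasure_singleton {μ : ℝ} (a : ℝ) : expMeasure μ {a} = 0 := by
  rw [expMeasure, gammaMeasure]
  exact (withDensity_absolutelyContinuous _ _) (measure_singleton a)

lemma expMeasure_Iic {μ : ℝ} (hμ : 0 < μ) (a : ℝ) :
    expMeasure μ (Set.Iic a) =
      ENNReal.ofReal (if 0 ≤ a then 1 - Real.exp (-(μ * a)) else 0) := by
  haveI : IsProbabilityMeasure (expMeasure μ) := isProbabilityMeasure_expMeasure hμ
  have h1 : cdf (expMeasure μ) a = ((expMeasure μ) (Set.Iic a)).toReal := by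
    rw [cdf_eq_real, measureReal_def]
  rw [← cdf_expMeasure_eq hμ, h1, ENNReal.ofReal_toReal (measure_ne_top _ _)]

variable {Ω : Type*} [MeasurableSpace Ω] (Pr : Measure Ω) [IsProbabilityMeasure Pr]
  {n : ℕ} {μ : ℝ} (hμ : 0 < μ) {T : Fin n → Ω → ℝ}
  (hmeas : ∀ i, Measurable (T i))
  (hexp : ∀ (i : Fin n) (t : ℝ), 0 ≤ t →
      Pr {ω | t < T i ω} = ENNReal.ofReal (Real.exp (-μ * t)))

lemma Pr_Ioi (hμ : 0 < μ) (hmeas : ∀ i, Measurable (T i))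
    (hexp : ∀ (i : Fin n) (t : ℝ), 0 ≤ t →
      Pr {ω | t < T i ω} = ENNReal.ofReal (Real.exp (-μ * t))) (i : Fin n) (t : ℝ) :
    Pr (T i ⁻¹' Set.Ioi t) = ENNReal.ofReal (Real.exp (-μ * max t 0)) := by
  rcases le_or_gt 0 t with ht | ht
  · rw [max_eq_left ht]
    exact hexp i t ht
  · rw [max_eq_right ht.le]
    have h0 : Pr (T i ⁻¹' Set.Ioi (0:ℝ)) = 1 := by
      have := hexp i 0 le_rfl
      exact (by simpa using this : Pr {ω | 0 < T i ω} = 1)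
    have hle : Pr (T i ⁻¹' Set.Ioi (0:ℝ)) ≤ Pr (T i ⁻¹' Set.Ioi t) :=
      measure_mono (Set.preimage_mono (Set.Ioi_subset_Ioi ht.le))
    have : Pr (T i ⁻¹' Set.Ioi t) = 1 :=
      le_antisymm prob_le_one (h0 ▸ hle)
    rw [this]
    simp

lemma marg (hμ : 0 < μ) (hmeas : ∀ i, Measurable (T i))
    (hexp : ∀ (i : Fin n) (t : ℝ), 0 ≤ t →
      Pr {ω | t < T i ω} = ENNReal.ofReal (Real.exp (-μ * t))) (i : Fin n) : Measure.map (T i) Pr = expMeasure μ := by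
  haveI : IsProbabilityMeasure (expMeasure μ) := isProbabilityMeasure_expMeasure hμ
  haveI : IsProbabilityMeasure (Measure.map (T i) Pr) :=
    Measure.isProbabilityMeasure_map (hmeas i).aemeasurable
  refine Measure.ext_of_Iic _ _ (fun a => ?_)
  rw [Measure.map_apply (hmeas i) measurableSet_Iic, expMeasure_Iic hμ]
  have hcompl : T i ⁻¹' Set.Iic a = (T i ⁻¹' Set.Ioi a)ᶜ := by
    rw [← Set.preimage_compl, Set.compl_Ioi]
  rw [hcompl, prob_compl_eq_one_sub ((hmeas i) measurableSet_Ioi),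
    Pr_Ioi Pr hμ hmeas hexp i a]
  rcases le_or_gt 0 a with ha | ha
  · rw [max_eq_left ha, if_pos ha, ENNReal.ofReal_sub _ (Real.exp_nonneg _)]
    simp [neg_mul]
  · rw [max_eq_right ha.le, if_neg (not_le.2 ha)]
    simp

lemma joint (hμ : 0 < μ) (hmeas : ∀ i, Measurable (T i))
    (hexp : ∀ (i : Fin n) (t : ℝ), 0 ≤ t →
      Pr {ω | t < T i ω} = ENNReal.ofReal (Real.exp (-μ * t)))
    (hindep : iIndepFun T Pr) :
    Measure.map (fun ω i => T i ω) Pr = Measure.pi (fun _ : Fin n => expMeasure μ) := by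
  haveI : IsProbabilityMeasure (expMeasure μ) := isProbabilityMeasure_expMeasure hμ
  have hTvec : Measurable (fun ω i => T i ω) := measurable_pi_lambda _ hmeas
  refine (Measure.pi_eq (fun s hs => ?_)).symm
  rw [Measure.map_apply hTvec (MeasurableSet.univ_pi hs)]
  have hpre : (fun ω i => T i ω) ⁻¹' Set.pi Set.univ s = ⋂ i ∈ Finset.univ, T i ⁻¹' s i := by
    ext ω; simp [Set.mem_pi]
  rw [hpre, hindep.measure_inter_preimage_eq_mul Finset.univ (fun i _ => hs i)]
  refine Finset.prod_congr rfl (fun i _ => ?_)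
  rw [← marg Pr hμ hmeas hexp i, Measure.map_apply (hmeas i) (hs i)]


lemma prod_diag_null {μ : ℝ} (hμ : 0 < μ) :
    (expMeasure μ).prod (expMeasure μ) {p : ℝ × ℝ | p.1 = p.2} = 0 := by
  haveI : IsProbabilityMeasure (expMeasure μ) := isProbabilityMeasure_expMeasure hμ
  have hd : MeasurableSet {p : ℝ × ℝ | p.1 = p.2} :=
    measurableSet_eq_fun measurable_fst measurable_snd
  rw [Measure.prod_apply hd]
  have h1 : ∀ a : ℝ, (Prod.mk a ⁻¹' {p : ℝ × ℝ | p.1 = p.2}) = {a} := by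
    intro a; ext b; simp [eq_comm]
  simp only [h1, expMeasure_singleton]
  simp

lemma Pr_eq_null (hμ : 0 < μ) (hmeas : ∀ i, Measurable (T i))
    (hindep : iIndepFun T Pr)
    (hexp : ∀ (i : Fin n) (t : ℝ), 0 ≤ t →
      Pr {ω | t < T i ω} = ENNReal.ofReal (Real.exp (-μ * t)))
    {i j : Fin n} (hij : i ≠ j) : Pr {ω | T i ω = T j ω} = 0 := by
  have hIF : IndepFun (T i) (T j) Pr := hindep.indepFun hij
  have hmap := (indepFun_iff_map_prod_eq_prod_map_map
    (hmeas i).aemeasurable (hmeas j).aemeasurable).1 hIF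
  have hd : MeasurableSet {p : ℝ × ℝ | p.1 = p.2} :=
    measurableSet_eq_fun measurable_fst measurable_snd
  have hset : {ω | T i ω = T j ω} = (fun ω => (T i ω, T j ω)) ⁻¹' {p : ℝ × ℝ | p.1 = p.2} := rfl
  rw [hset, ← Measure.map_apply ((hmeas i).prodMk (hmeas j)) hd, hmap,
    marg Pr hμ hmeas hexp i, marg Pr hμ hmeas hexp j, prod_diag_null hμ]

lemma Pr_nonpos_null (hmeas : ∀ i, Measurable (T i))
    (hexp : ∀ (i : Fin n) (t : ℝ), 0 ≤ t →
      Pr {ω | t < T i ω} = ENNReal.ofReal (Real.exp (-μ * t))) (i : Fin n) : Pr {ω | T i ω ≤ 0} = 0 := by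
  have h0 : Pr (T i ⁻¹' Set.Ioi (0:ℝ)) = 1 := (by simpa using hexp i 0 le_rfl : Pr {ω | 0 < T i ω} = 1)
  have hcompl : {ω | T i ω ≤ 0} = (T i ⁻¹' Set.Ioi (0:ℝ))ᶜ := by
    ext ω; simp
  rw [hcompl, prob_compl_eq_one_sub ((hmeas i) measurableSet_Ioi), h0]
  simp

/-- the full-measure set of injective, positive tuples -/
def DM (n : ℕ) : Set (Fin n → ℝ) :=
  {x | (∀ i j : Fin n, i ≠ j → x i ≠ x j) ∧ ∀ i, 0 < x i}

lemma measurableSet_DM : MeasurableSet (DM n) := by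
  have h1 : DM n = (⋂ i, ⋂ j, ⋂ (_ : i ≠ j), {x : Fin n → ℝ | x i ≠ x j}) ∩
      ⋂ i, {x : Fin n → ℝ | 0 < x i} := by
    ext x; simp [DM]
  rw [h1]
  refine MeasurableSet.inter ?_ ?_
  · refine MeasurableSet.iInter (fun i => MeasurableSet.iInter (fun j =>
      MeasurableSet.iInter (fun _ => ?_)))
    exact (measurableSet_eq_fun (measurable_pi_apply i) (measurable_pi_apply j)).compl
  · exact MeasurableSet.iInter (fun i => measurableSet_lt measurable_const (measurable_pi_apply i))

lemma Pr_DM_compl_null (hμ : 0 < μ) (hmeas : ∀ i, Measurable (T i))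
    (hindep : iIndepFun T Pr)
    (hexp : ∀ (i : Fin n) (t : ℝ), 0 ≤ t →
      Pr {ω | t < T i ω} = ENNReal.ofReal (Real.exp (-μ * t))) : Pr ((fun ω i => T i ω) ⁻¹' (DM n)ᶜ) = 0 := by
  have hsub : (fun ω i => T i ω) ⁻¹' (DM n)ᶜ ⊆
      (⋃ i, ⋃ j, ⋃ (_ : i ≠ j), {ω | T i ω = T j ω}) ∪ ⋃ i, {ω | T i ω ≤ 0} := by
    intro ω hω
    simp only [Set.mem_preimage, Set.mem_compl_iff, DM, Set.mem_setOf_eq, not_and_or] at hω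
    rcases hω with h | h
    · left
      push_neg at h
      obtain ⟨i, j, hij, heq⟩ := h
      simp only [Set.mem_iUnion]
      exact ⟨i, j, hij, heq⟩
    · right
      push_neg at h
      obtain ⟨i, hi⟩ := h
      simp only [Set.mem_iUnion]
      exact ⟨i, hi⟩
  refine measure_mono_null hsub ?_
  refine measure_union_null ?_ ?_
  · refine measure_iUnion_null (fun i => measure_iUnion_null (fun j => measure_iUnion_null (fun hij => ?_)))
    exact Pr_eq_null Pr hμ hmeas hindep hexp hij
  · exact measure_iUnion_null (fun i => Pr_nonpos_null Pr hmeas hexp i)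


lemma measurableSet_Gset (A : Finset (Fin n)) : MeasurableSet (Gset A) := by
  have h1 : Gset A = ⋂ i, ⋂ (_ : i ∈ A), ⋂ j, ⋂ (_ : j ∉ A), {x : Fin n → ℝ | x i < x j} := by
    ext x; simp [Gset]
  rw [h1]
  refine MeasurableSet.iInter fun i => MeasurableSet.iInter fun _ =>
    MeasurableSet.iInter fun j => MeasurableSet.iInter fun _ => ?_
  exact measurableSet_lt (measurable_pi_apply i) (measurable_pi_apply j)

/-- a permutation mapping `B` onto `A`, given equal cards -/
lemma exists_perm_image {A B : Finset (Fin n)} (h : B.card = A.card) :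
    ∃ g : Equiv.Perm (Fin n), B.image g = A := by
  classical
  have h2 : Bᶜ.card = Aᶜ.card := by
    rw [Finset.card_compl, Finset.card_compl, h]
  let e₁ : {x // x ∈ B} ≃ {x // x ∈ A} := Finset.equivOfCardEq h
  let e₂' : {x // x ∈ Bᶜ} ≃ {x // x ∈ Aᶜ} := Finset.equivOfCardEq h2
  let e₂ : {x // x ∉ B} ≃ {x // x ∉ A} :=
    ((Equiv.subtypeEquivRight (fun x => (Finset.mem_compl (s := B)).symm)).trans e₂').trans
      (Equiv.subtypeEquivRight (fun x => Finset.mem_compl (s := A)))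
  refine ⟨Equiv.subtypeCongr e₁ e₂, ?_⟩
  have hsub : B.image (Equiv.subtypeCongr e₁ e₂) ⊆ A := by
    intro a ha
    simp only [Finset.mem_image] at ha
    obtain ⟨b, hb, rfl⟩ := ha
    have : Equiv.subtypeCongr e₁ e₂ b = e₁ ⟨b, hb⟩ := by
      simp [Equiv.subtypeCongr, hb]
    rw [this]
    exact (e₁ ⟨b, hb⟩).2
  refine Finset.eq_of_subset_of_card_le hsub ?_
  rw [Finset.card_image_of_injective _ (Equiv.injective _), h]

lemma pi_Gset_perm {μ : ℝ} (hμ : 0 < μ) (B : Finset (Fin n)) (e : Equiv.Perm (Fin n)) :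
    (Measure.pi (fun _ : Fin n => expMeasure μ)) (Gset B) = (Measure.pi (fun _ : Fin n => expMeasure μ)) (Gset (B.image e.symm)) := by
  haveI : IsProbabilityMeasure (expMeasure μ) := isProbabilityMeasure_expMeasure hμ
  have hmp : MeasurePreserving (MeasurableEquiv.piCongrLeft (fun _ : Fin n => ℝ) e)
      (Measure.pi (fun _ : Fin n => expMeasure μ)) (Measure.pi (fun _ : Fin n => expMeasure μ)) :=
    measurePreserving_piCongrLeft (fun _ : Fin n => expMeasure μ) e
  have hpre : (MeasurableEquiv.piCongrLeft (fun _ : Fin n => ℝ) e) ⁻¹' (Gset B)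
      = Gset (B.image e.symm) := by
    ext x
    simp only [Set.mem_preimage, Gset, Set.mem_setOf_eq]
    have happ : ∀ j, (MeasurableEquiv.piCongrLeft (fun _ : Fin n => ℝ) e) x j = x (e.symm j) := by
      intro j
      simp [MeasurableEquiv.piCongrLeft, Equiv.piCongrLeft_apply_eq_cast]
    constructor
    · intro h i hi j hj
      simp only [Finset.mem_image] at hi hj
      obtain ⟨i', hi', rfl⟩ := hi
      have hj' : (e j) ∉ B := fun hc => hj ⟨e j, hc, by simp⟩
      have := h i' hi' (e j) hj'
      rw [happ i', happ (e j)] at this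
      simpa using this
    · intro h i hi j hj
      rw [happ i, happ j]
      refine h (e.symm i) (Finset.mem_image_of_mem _ hi) (e.symm j) ?_
      intro hc
      simp only [Finset.mem_image] at hc
      obtain ⟨j', hj', hj'e⟩ := hc
      have hjj : j' = j := by
        have := congrArg e hj'e
        simpa using this
      exact hj (hjj ▸ hj')
  rw [← hpre]
  exact (hmp.measure_preimage (measurableSet_Gset B).nullMeasurableSet).symm

lemma pi_Gset_eq_of_card {μ : ℝ} (hμ : 0 < μ) {A B : Finset (Fin n)} (h : A.card = B.card) :
    (Measure.pi (fun _ : Fin n => expMeasure μ)) (Gset A) = (Measure.pi (fun _ : Fin n => expMeasure μ)) (Gset B) := by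
  obtain ⟨g, hg⟩ := exists_perm_image (h.symm : B.card = A.card)
  have := pi_Gset_perm (μ := μ) hμ B g.symm
  rw [Equiv.symm_symm, hg] at this
  exact this.symm

lemma pi_Gset {μ : ℝ} (hμ : 0 < μ)
    (hDM : (Measure.pi (fun _ : Fin n => expMeasure μ)) ((DM n)ᶜ) = 0) {k : ℕ} (hk : k ≤ n)
    {A : Finset (Fin n)} (hA : A.card = k) :
    (Measure.pi (fun _ : Fin n => expMeasure μ)) (Gset A) = ((n.choose k : ℕ) : ENNReal)⁻¹ := by
  classical
  haveI : IsProbabilityMeasure (expMeasure μ) := isProbabilityMeasure_expMeasure hμ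
  set S := Finset.powersetCard k (Finset.univ : Finset (Fin n)) with hS
  have hdisj : (S : Set (Finset (Fin n))).PairwiseDisjoint Gset := by
    intro B hB C hC hne
    have hBc : B.card = k := (Finset.mem_powersetCard.1 (Finset.mem_coe.1 hB)).2
    have hCc : C.card = k := (Finset.mem_powersetCard.1 (Finset.mem_coe.1 hC)).2
    exact Gset_disjoint (hBc.trans hCc.symm) hne
  have hsum : (Measure.pi (fun _ : Fin n => expMeasure μ)) (⋃ B ∈ S, Gset B) = ∑ B ∈ S, (Measure.pi (fun _ : Fin n => expMeasure μ)) (Gset B) :=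
    measure_biUnion_finset hdisj (fun B _ => measurableSet_Gset B)
  have hcover : DM n ⊆ ⋃ B ∈ S, Gset B := by
    intro x hx
    have hinj : Function.Injective x := by
      intro a b hab
      by_contra hne
      exact hx.1 a b hne hab
    simp only [Set.mem_iUnion]
    refine ⟨Aset x k, ?_, mem_Gset_Aset hinj k⟩
    simp only [hS, Finset.mem_powersetCard]
    exact ⟨Finset.subset_univ _, card_Aset x hk⟩
  have hDM1 : (Measure.pi (fun _ : Fin n => expMeasure μ)) (DM n) = 1 := by
    have := prob_compl_eq_one_sub (μ := Measure.pi (fun _ : Fin n => expMeasure μ))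
      measurableSet_DM.compl
    rw [compl_compl] at this
    rw [this, hDM, tsub_zero]
  have hU1 : (Measure.pi (fun _ : Fin n => expMeasure μ)) (⋃ B ∈ S, Gset B) = 1 :=
    le_antisymm prob_le_one (hDM1 ▸ measure_mono hcover)
  have hall : ∀ B ∈ S, (Measure.pi (fun _ : Fin n => expMeasure μ)) (Gset B) = (Measure.pi (fun _ : Fin n => expMeasure μ)) (Gset A) := by
    intro B hB
    exact pi_Gset_eq_of_card hμ ((Finset.mem_powersetCard.1 hB).2.trans hA.symm)
  rw [hsum, Finset.sum_congr rfl hall, Finset.sum_const, hS, Finset.card_powersetCard,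
    Finset.card_univ, Fintype.card_fin] at hU1
  have hC0 : ((n.choose k : ℕ) : ENNReal) ≠ 0 := by
    simp [Nat.choose_eq_zero_iff, not_lt.2 hk]
  have hCt : ((n.choose k : ℕ) : ENNReal) ≠ ⊤ := ENNReal.natCast_ne_top _
  calc (Measure.pi (fun _ : Fin n => expMeasure μ)) (Gset A) = (((n.choose k : ℕ) : ENNReal)⁻¹ * ((n.choose k : ℕ) : ENNReal)) * (Measure.pi (fun _ : Fin n => expMeasure μ)) (Gset A) := by
        rw [ENNReal.inv_mul_cancel hC0 hCt, one_mul]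
    _ = ((n.choose k : ℕ) : ENNReal)⁻¹ * ((n.choose k) • (Measure.pi (fun _ : Fin n => expMeasure μ)) (Gset A)) := by
        rw [mul_assoc, nsmul_eq_mul]
    _ = ((n.choose k : ℕ) : ENNReal)⁻¹ := by rw [hU1, mul_one]



lemma DM_inj {x : Fin n → ℝ} (hx : x ∈ DM n) : Function.Injective x := by
  intro a b hab
  by_contra hne
  exact hx.1 a b hne hab

lemma measurableSet_Uset (Φ : (Fin n → Bool) → Bool) (k : ℕ) :
    MeasurableSet (Uset Φ k) :=
  MeasurableSet.biUnion (Wk Φ k).countable_toSet (fun A _ => measurableSet_Gset A)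

lemma card_of_mem_Wk {Φ : (Fin n → Bool) → Bool} {k : ℕ} {A : Finset (Fin n)}
    (hA : A ∈ Wk Φ k) : A.card = k :=
  (Finset.mem_powersetCard.1 (Finset.mem_filter.1 hA).1).2

lemma pi_Uset {μ : ℝ} (hμ : 0 < μ)
    (hDM : Measure.pi (fun _ : Fin n => expMeasure μ) ((DM n)ᶜ) = 0)
    (Φ : (Fin n → Bool) → Bool) {k : ℕ} (hk : k ≤ n) :
    Measure.pi (fun _ : Fin n => expMeasure μ) (Uset Φ k)
      = ((Wk Φ k).card : ENNReal) * ((n.choose k : ℕ) : ENNReal)⁻¹ := by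
  have hdisj : ((Wk Φ k : Finset (Finset (Fin n))) : Set (Finset (Fin n))).PairwiseDisjoint
      Gset := by
    intro B hB C hC hne
    exact Gset_disjoint ((card_of_mem_Wk (Finset.mem_coe.1 hB)).trans
      (card_of_mem_Wk (Finset.mem_coe.1 hC)).symm) hne
  rw [Uset, measure_biUnion_finset hdisj (fun B _ => measurableSet_Gset B),
    Finset.sum_congr rfl (fun B hB => pi_Gset hμ hDM hk (card_of_mem_Wk hB)),
    Finset.sum_const, nsmul_eq_mul]

lemma Uset_antitone_on_DM {Φ : (Fin n → Bool) → Bool}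
    (hmono : ∀ x y : Fin n → Bool, (∀ i, x i ≤ y i) → Φ x ≤ Φ y)
    {j : ℕ} (hj1 : 1 ≤ j) (hjn : j ≤ n) :
    Uset Φ j ∩ DM n ⊆ Uset Φ (j - 1) ∩ DM n := by
  rintro x ⟨hU, hxD⟩
  have hinj := DM_inj hxD
  have hw := (mem_Uset_iff hinj hjn).1 hU
  have hle : Φ (wvec x j) ≤ Φ (wvec x (j - 1)) :=
    hmono _ _ (fun i => wvec_anti x (by omega) i)
  rw [hw] at hle
  have hw' : Φ (wvec x (j - 1)) = true := by
    rcases hb : Φ (wvec x (j - 1)) with _ | _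
    · rw [hb] at hle; exact absurd hle (by simp)
    · rfl
  exact ⟨(mem_Uset_iff hinj (by omega)).2 hw', hxD⟩

lemma transfer {Ω : Type*} [MeasurableSpace Ω] (Pr : Measure Ω) {μ : ℝ}
    {Tvec : Ω → Fin n → ℝ} (hTvec : Measurable Tvec)
    (hjoint : Measure.map Tvec Pr = Measure.pi (fun _ : Fin n => expMeasure μ))
    (hnull : Pr (Tvec ⁻¹' (DM n)ᶜ) = 0)
    {B Bm : Set (Fin n → ℝ)} (hBm : MeasurableSet Bm) (hEq : B ∩ DM n = Bm ∩ DM n) :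
    Pr (Tvec ⁻¹' B) = Measure.pi (fun _ : Fin n => expMeasure μ) Bm := by
  set P := Measure.pi (fun _ : Fin n => expMeasure μ) with hP
  have hPDM : P ((DM n)ᶜ) = 0 := by
    rw [← hjoint, Measure.map_apply hTvec measurableSet_DM.compl]
    exact hnull
  have hconull : ∀ s : Set (Fin n → ℝ), P (s ∩ DM n) = P s := by
    intro s
    refine le_antisymm (measure_mono Set.inter_subset_left) ?_
    calc P s ≤ P ((s ∩ DM n) ∪ (DM n)ᶜ) := measure_mono (fun x hx => by
          by_cases h : x ∈ DM n
          · exact Or.inl ⟨hx, h⟩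
          · exact Or.inr h)
      _ ≤ P (s ∩ DM n) + P ((DM n)ᶜ) := measure_union_le _ _
      _ = P (s ∩ DM n) := by rw [hPDM, add_zero]
  have hBmDM : MeasurableSet (Bm ∩ DM n) := hBm.inter measurableSet_DM
  have hmain : Pr (Tvec ⁻¹' (Bm ∩ DM n)) = P (Bm ∩ DM n) := by
    rw [← hjoint, Measure.map_apply hTvec hBmDM]
  refine le_antisymm ?_ ?_
  · calc Pr (Tvec ⁻¹' B) ≤ Pr (Tvec ⁻¹' (B ∩ DM n) ∪ Tvec ⁻¹' (DM n)ᶜ) :=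
        measure_mono (fun ω hω => by
          by_cases h : Tvec ω ∈ DM n
          · exact Or.inl ⟨hω, h⟩
          · exact Or.inr h)
      _ ≤ Pr (Tvec ⁻¹' (B ∩ DM n)) + Pr (Tvec ⁻¹' (DM n)ᶜ) := measure_union_le _ _
      _ = Pr (Tvec ⁻¹' (Bm ∩ DM n)) := by rw [hnull, add_zero, hEq]
      _ = P (Bm ∩ DM n) := hmain
      _ = P Bm := hconull Bm
  · calc P Bm = P (Bm ∩ DM n) := (hconull Bm).symm
      _ = Pr (Tvec ⁻¹' (Bm ∩ DM n)) := hmain.symm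
      _ = Pr (Tvec ⁻¹' (B ∩ DM n)) := by rw [hEq]
      _ ≤ Pr (Tvec ⁻¹' B) := measure_mono (Set.preimage_mono Set.inter_subset_left)

end Stmt17

/-- Distribution of the number of failed components at the first repair under the
`r`-out-of-`n`:R policy, for a semi-coherent system with i.i.d. exponential
component lifetimes: `P(N(T_rep) = j) = s_j` for `j < r`,
`P(N(T_rep) = r) = Σ_{k=r}^{n} s_k`, and `P(N(T_rep) = j) = 0` for `j > r`,
where `T_rep = min{T_fail, T_{r:n}}` and `N(T_rep) = #{i : T_i ≤ T_rep}`. -/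
theorem stmt17 {Ω : Type*} [MeasurableSpace Ω] (Pr : Measure Ω) [IsProbabilityMeasure Pr]
    (n : ℕ) (hn : 1 ≤ n) (Φ : (Fin n → Bool) → Bool)
    (hmono : ∀ x y : Fin n → Bool, (∀ i, x i ≤ y i) → Φ x ≤ Φ y)
    (hΦ0 : Φ (fun _ => false) = false) (hΦ1 : Φ (fun _ => true) = true)
    (μ : ℝ) (hμ : 0 < μ)
    (T : Fin n → Ω → ℝ)
    (hmeas : ∀ i, Measurable (T i))
    (hindep : iIndepFun T Pr)
    (hexp : ∀ (i : Fin n) (t : ℝ), 0 ≤ t →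
      Pr {ω | t < T i ω} = ENNReal.ofReal (Real.exp (-μ * t)))
    (r : ℕ) (hr1 : 1 ≤ r) (hrn : r ≤ n) :
    (∀ j, 1 ≤ j → j < r →
      (Pr {ω | (Finset.univ.filter (fun i : Fin n =>
          T i ω ≤ min (failTime n Φ (fun i' => T i' ω))
            (orderStat n (fun i' => T i' ω) ⟨r - 1, by omega⟩))).card = j}).toReal =
        structSig n Φ j) ∧
    ((Pr {ω | (Finset.univ.filter (fun i : Fin n =>
        T i ω ≤ min (failTime n Φ (fun i' => T i' ω))
          (orderStat n (fun i' => T i' ω) ⟨r - 1, by omega⟩))).card = r}).toReal =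
      ∑ k ∈ Finset.Icc r n, structSig n Φ k) ∧
    (∀ j, r < j →
      (Pr {ω | (Finset.univ.filter (fun i : Fin n =>
          T i ω ≤ min (failTime n Φ (fun i' => T i' ω))
            (orderStat n (fun i' => T i' ω) ⟨r - 1, by omega⟩))).card = j}).toReal =
        0) := by
  classical
  have hfin : r - 1 < n := by omega
  have hTvec : Measurable (fun ω (i : Fin n) => T i ω) := measurable_pi_lambda _ hmeas
  have hjoint := Stmt17.joint Pr hμ hmeas hexp hindep
  have hnull := Stmt17.Pr_DM_compl_null Pr hμ hmeas hindep hexp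
  haveI : IsProbabilityMeasure (expMeasure μ) := isProbabilityMeasure_expMeasure hμ
  have hPDM : Measure.pi (fun _ : Fin n => expMeasure μ) ((Stmt17.DM n)ᶜ) = 0 := by
    rw [← hjoint, Measure.map_apply hTvec Stmt17.measurableSet_DM.compl]
    exact hnull
  have hconull : ∀ s : Set (Fin n → ℝ),
      Measure.pi (fun _ : Fin n => expMeasure μ) (s ∩ Stmt17.DM n)
        = Measure.pi (fun _ : Fin n => expMeasure μ) s := by
    intro s
    refine le_antisymm (measure_mono Set.inter_subset_left) ?_
    calc Measure.pi (fun _ : Fin n => expMeasure μ) s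
        ≤ Measure.pi (fun _ : Fin n => expMeasure μ)
            ((s ∩ Stmt17.DM n) ∪ (Stmt17.DM n)ᶜ) := measure_mono (fun x hx => by
          by_cases h : x ∈ Stmt17.DM n
          · exact Or.inl ⟨hx, h⟩
          · exact Or.inr h)
      _ ≤ Measure.pi (fun _ : Fin n => expMeasure μ) (s ∩ Stmt17.DM n)
            + Measure.pi (fun _ : Fin n => expMeasure μ) ((Stmt17.DM n)ᶜ) :=
          measure_union_le _ _
      _ = Measure.pi (fun _ : Fin n => expMeasure μ) (s ∩ Stmt17.DM n) := by
          rw [hPDM, add_zero]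
  have hUreal : ∀ k : ℕ, k ≤ n →
      (Measure.pi (fun _ : Fin n => expMeasure μ) (Stmt17.Uset Φ k)).toReal = Sbar n Φ k := by
    intro k hk
    rw [Stmt17.pi_Uset hμ hPDM Φ hk, ENNReal.toReal_mul, Stmt17.Sbar_eq_Wk, div_eq_mul_inv]
    simp [ENNReal.toReal_inv]
  have hcardmin : ∀ x ∈ Stmt17.DM n,
      (Finset.univ.filter (fun i : Fin n =>
        x i ≤ min (failTime n Φ x) (orderStat n x ⟨r - 1, hfin⟩))).card
        = min (Stmt17.kfail Φ x) r := fun x hx =>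
    Stmt17.card_filter_eq_min hmono hΦ0 hΦ1 (Stmt17.DM_inj hx) hx.2 hr1 hrn hfin
  have hev : ∀ j : ℕ, {ω | (Finset.univ.filter (fun i : Fin n =>
          T i ω ≤ min (failTime n Φ (fun i' => T i' ω))
            (orderStat n (fun i' => T i' ω) ⟨r - 1, hfin⟩))).card = j}
      = (fun ω (i : Fin n) => T i ω) ⁻¹' {x : Fin n → ℝ | (Finset.univ.filter (fun i : Fin n =>
          x i ≤ min (failTime n Φ x) (orderStat n x ⟨r - 1, hfin⟩))).card = j} :=
    fun j => rfl
  refine ⟨?_, ?_, ?_⟩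
  · -- case 1 ≤ j < r
    intro j hj1 hjr
    have hjn : j ≤ n := by omega
    have hEq : {x : Fin n → ℝ | (Finset.univ.filter (fun i : Fin n =>
          x i ≤ min (failTime n Φ x) (orderStat n x ⟨r - 1, hfin⟩))).card = j} ∩ Stmt17.DM n
        = (Stmt17.Uset Φ (j - 1) \ Stmt17.Uset Φ j) ∩ Stmt17.DM n := by
      ext x
      simp only [Set.mem_inter_iff, Set.mem_setOf_eq, Set.mem_diff]
      constructor
      · rintro ⟨hcard, hxD⟩
        rw [hcardmin x hxD] at hcard
        refine ⟨⟨(Stmt17.mem_Uset_iff (Stmt17.DM_inj hxD) (by omega)).2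
          ((Stmt17.lt_kfail_iff hmono hΦ0).1 (by omega)), ?_⟩, hxD⟩
        intro hU
        have := (Stmt17.lt_kfail_iff hmono hΦ0).2
          ((Stmt17.mem_Uset_iff (Stmt17.DM_inj hxD) hjn).1 hU)
        omega
      · rintro ⟨⟨hU1, hU2⟩, hxD⟩
        have h1 : j - 1 < Stmt17.kfail Φ x := (Stmt17.lt_kfail_iff hmono hΦ0).2
          ((Stmt17.mem_Uset_iff (Stmt17.DM_inj hxD) (by omega)).1 hU1)
        have h2 : ¬ (j < Stmt17.kfail Φ x) := fun hc => hU2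
          ((Stmt17.mem_Uset_iff (Stmt17.DM_inj hxD) hjn).2
            ((Stmt17.lt_kfail_iff hmono hΦ0).1 hc))
        refine ⟨?_, hxD⟩
        rw [hcardmin x hxD]
        omega
    rw [hev j, Stmt17.transfer Pr hTvec hjoint hnull
      ((Stmt17.measurableSet_Uset Φ (j - 1)).diff (Stmt17.measurableSet_Uset Φ j)) hEq]
    have hsub : Stmt17.Uset Φ j ∩ Stmt17.DM n ⊆ Stmt17.Uset Φ (j - 1) ∩ Stmt17.DM n :=
      Stmt17.Uset_antitone_on_DM hmono hj1 hjn
    have hdiff : (Stmt17.Uset Φ (j - 1) \ Stmt17.Uset Φ j) ∩ Stmt17.DM n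
        = (Stmt17.Uset Φ (j - 1) ∩ Stmt17.DM n) \ (Stmt17.Uset Φ j ∩ Stmt17.DM n) := by
      ext x
      simp only [Set.mem_inter_iff, Set.mem_diff]
      tauto
    have h1 : Measure.pi (fun _ : Fin n => expMeasure μ)
          (Stmt17.Uset Φ (j - 1) \ Stmt17.Uset Φ j)
        = Measure.pi (fun _ : Fin n => expMeasure μ)
          ((Stmt17.Uset Φ (j - 1) ∩ Stmt17.DM n) \ (Stmt17.Uset Φ j ∩ Stmt17.DM n)) := by
      rw [← hconull (Stmt17.Uset Φ (j - 1) \ Stmt17.Uset Φ j), hdiff]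
    have h2 := measure_diff (μ := Measure.pi (fun _ : Fin n => expMeasure μ)) hsub
      ((Stmt17.measurableSet_Uset Φ j).inter Stmt17.measurableSet_DM).nullMeasurableSet
      (measure_ne_top _ _)
    rw [h1, h2, hconull, hconull]
    have hle : Measure.pi (fun _ : Fin n => expMeasure μ) (Stmt17.Uset Φ j)
        ≤ Measure.pi (fun _ : Fin n => expMeasure μ) (Stmt17.Uset Φ (j - 1)) := by
      rw [← hconull (Stmt17.Uset Φ j), ← hconull (Stmt17.Uset Φ (j - 1))]
      exact measure_mono hsub
    rw [ENNReal.toReal_sub_of_le hle (measure_ne_top _ _), hUreal (j - 1) (by omega),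
      hUreal j hjn, structSig]
  · -- case j = r
    have hEq : {x : Fin n → ℝ | (Finset.univ.filter (fun i : Fin n =>
          x i ≤ min (failTime n Φ x) (orderStat n x ⟨r - 1, hfin⟩))).card = r} ∩ Stmt17.DM n
        = Stmt17.Uset Φ (r - 1) ∩ Stmt17.DM n := by
      ext x
      simp only [Set.mem_inter_iff, Set.mem_setOf_eq]
      constructor
      · rintro ⟨hcard, hxD⟩
        rw [hcardmin x hxD] at hcard
        exact ⟨(Stmt17.mem_Uset_iff (Stmt17.DM_inj hxD) (by omega)).2
          ((Stmt17.lt_kfail_iff hmono hΦ0).1 (by omega)), hxD⟩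
      · rintro ⟨hU1, hxD⟩
        have h1 : r - 1 < Stmt17.kfail Φ x := (Stmt17.lt_kfail_iff hmono hΦ0).2
          ((Stmt17.mem_Uset_iff (Stmt17.DM_inj hxD) (by omega)).1 hU1)
        refine ⟨?_, hxD⟩
        rw [hcardmin x hxD]
        omega
    rw [hev r, Stmt17.transfer Pr hTvec hjoint hnull
      (Stmt17.measurableSet_Uset Φ (r - 1)) hEq, hUreal (r - 1) (by omega),
      Stmt17.sum_structSig hr1 hrn, Stmt17.Sbar_n_eq_zero hn hΦ0, sub_zero]
  · -- case j > r
    intro j hjr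
    have hEq : {x : Fin n → ℝ | (Finset.univ.filter (fun i : Fin n =>
          x i ≤ min (failTime n Φ x) (orderStat n x ⟨r - 1, hfin⟩))).card = j} ∩ Stmt17.DM n
        = (∅ : Set (Fin n → ℝ)) ∩ Stmt17.DM n := by
      ext x
      simp only [Set.mem_inter_iff, Set.mem_setOf_eq, Set.mem_empty_iff_false,
        false_and, iff_false, not_and]
      intro hcard hxD
      rw [hcardmin x hxD] at hcard
      omega
    rw [hev j, Stmt17.transfer Pr hTvec hjoint hnull MeasurableSet.empty hEq,
      measure_empty]
    rfl
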